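/- Let H be a real Hilbert space, let r ≥ 1 and let A_i : H → Set H (i = 1,…,r) be set-valued operators. In the product Hilbert space 𝐇 = H^r, let 𝐁(x_1,…,x_r) = A_1(x_1) × ⋯ × A_r(x_r), let 𝐃 = {(x,…,x) | x ∈ H} be the diagonal with canonical embedding j(x) = (x,…,x), and let N_𝐃 be the normal cone operator of 𝐃. Then for every x ∈ H, J_{𝐁 + N_𝐃}(j(x)) = {j(p) | p ∈ J_{(1/r)∑_{i=1}^r A_i}(x)}, where the sum of operators is taken pointwise with Minkowski sums. -/

import Mathlib

open Pointwise Finset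

/-- The product operator `𝐁(x₁,…,x_r) = A₁(x₁) × ⋯ × A_r(x_r)` on `H^r`. -/
def prodOp {H : Type*} [NormedAddCommGroup H] [InnerProductSpace ℝ H] {r : ℕ}
    (A : Fin r → H → Set H) (x : Fin r → H) : Set (Fin r → H) :=
  {u | ∀ i, u i ∈ A i (x i)}

/-- The normal cone operator of the diagonal `𝐃 = {(x,…,x) | x ∈ H}` in `H^r`:
`N_𝐃(𝐱) = {𝐮 | ∑ᵢ uᵢ = 0}` if `𝐱 ∈ 𝐃`, and `∅` otherwise. -/
def diagNormalCone {H : Type*} [NormedAddCommGroup H] [InnerProductSpace ℝ H] {r : ℕ}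
    (x : Fin r → H) : Set (Fin r → H) :=
  {u | (∃ z : H, ∀ i, x i = z) ∧ ∑ i, u i = 0}

theorem stmt15 {H : Type*} [NormedAddCommGroup H] [InnerProductSpace ℝ H] [CompleteSpace H]
    (r : ℕ) (hr : 1 ≤ r) (A : Fin r → H → Set H) (x : H) :
    -- `J_{𝐁 + N_𝐃}(j(x)) = {j(p) | p ∈ J_{(1/r)∑ᵢ Aᵢ}(x)}`
    {y : Fin r → H | (fun _ => x) - y ∈ prodOp A y + diagNormalCone y}
      = (fun p : H => fun _ : Fin r => p) ''
          {p : H | x - p ∈ ((r : ℝ)⁻¹) • ∑ i, A i p} := by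
  have hr0 : (r : ℝ) ≠ 0 := by positivity
  ext y
  simp only [Set.mem_setOf_eq, Set.mem_add, Set.mem_image]
  constructor
  · rintro ⟨b, hb, n, ⟨⟨z, hz⟩, hn⟩, hbn⟩
    have hyz : y = fun _ => z := funext hz
    subst hyz
    refine ⟨z, ?_, rfl⟩
    have hxz : ∀ i, x - z = b i + n i := fun i => by
      have := congrFun hbn i; simp only [Pi.add_apply, Pi.sub_apply] at this; exact this.symm
    have hsum : (r : ℝ) • (x - z) = ∑ i, b i := by
      have : ∑ i : Fin r, (x - z) = ∑ i, (b i + n i) := Finset.sum_congr rfl fun i _ => hxz i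
      rw [Finset.sum_add_distrib, hn, add_zero] at this
      simpa [← Nat.cast_smul_eq_nsmul ℝ, smul_sub] using this
    refine Set.mem_smul_set.2 ⟨∑ i, b i, ?_, ?_⟩
    · exact (Set.mem_fintype_sum _ _).2 ⟨b, fun i => hb i, rfl⟩
    · rw [← hsum, smul_smul, inv_mul_cancel₀ hr0, one_smul]
  · rintro ⟨p, hp, rfl⟩
    obtain ⟨s, hs, hsx⟩ := Set.mem_smul_set.1 hp
    obtain ⟨g, hg, hgs⟩ := (Set.mem_fintype_sum _ _).1 hs
    refine ⟨g, fun i => hg i, (fun _ => x - p) - g, ⟨⟨p, fun _ => rfl⟩, ?_⟩, by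
      funext i; simp⟩
    have : ∑ i : Fin r, (x - p) = (r : ℝ) • (x - p) := by
      simp [← Nat.cast_smul_eq_nsmul ℝ, smul_sub]
    have hrxp : (r : ℝ) • (x - p) = ∑ i, g i := by
      rw [← hsx, ← hgs, smul_smul, mul_inv_cancel₀ hr0, one_smul]
    simp only [Pi.sub_apply, Finset.sum_sub_distrib]
    rw [← Finset.sum_sub_distrib, this, hrxp, sub_self]
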